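/- For every n ≥ 1, the (n−1)st Schröder number r_{n−1} equals the number of triples consisting of integer sequences i_1 ≥ i_2 ≥ ⋯ ≥ i_s > 0 and 0 < j_1 ≤ j_2 ≤ ⋯ ≤ j_s, together with a binary sequence r_1,…,r_s ∈ {0,1} (the common length s ≥ 0 being arbitrary), satisfying i_1−r_1 > i_2−r_2 > ⋯ > i_s−r_s > 0, 0 < j_1−r_1 < j_2−r_2 < ⋯ < j_s−r_s, and i_k + j_k ≤ n + r_k for all k = 1,…,s. -/

import Mathlib

/-- The large Schröder numbers: `r 0 = 1` and
`r n = r (n-1) + ∑_{i=0}^{n-1} r i * r (n-1-i)` for `n ≥ 1`. -/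
def schroeder : ℕ → ℕ
  | 0 => 1
  | n + 1 => schroeder n + ∑ i ∈ (Finset.range (n + 1)).attach,
      schroeder i.1 * schroeder (n - i.1)
decreasing_by
  · exact Nat.lt_succ_self n
  · exact Nat.lt_succ_of_le (Nat.le_of_lt_succ (Finset.mem_range.mp i.2))
  · exact Nat.lt_succ_of_le (Nat.sub_le n i.1)

/-- A triple of sequences `i_1 ≥ … ≥ i_s > 0`, `0 < j_1 ≤ … ≤ j_s` and a binary sequence
`r_1, …, r_s` with `i_1 - r_1 > … > i_s - r_s > 0`, `0 < j_1 - r_1 < … < j_s - r_s`, and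
`i_k + j_k ≤ n + r_k` for all `k`. -/
structure TripleData (n : ℕ) where
  s : ℕ
  i : Fin s → ℕ
  j : Fin s → ℕ
  r : Fin s → ℕ
  hipos : ∀ k, 0 < i k
  hjpos : ∀ k, 0 < j k
  hi : Antitone i
  hj : Monotone j
  hr : ∀ k, r k ≤ 1
  hir : StrictAnti fun k => (i k : ℤ) - (r k : ℤ)
  hirpos : ∀ k, 0 < (i k : ℤ) - (r k : ℤ)
  hjr : StrictMono fun k => (j k : ℤ) - (r k : ℤ)
  hjrpos : ∀ k, 0 < (j k : ℤ) - (r k : ℤ)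
  hbound : ∀ k, i k + j k ≤ n + r k


namespace SchroederCount

/-- entries are `(a, b, r) = (i - r, j - r, r)` -/
abbrev E := ℕ × ℕ × ℕ

def good (n : ℕ) (e : E) : Prop :=
  e.2.2 ≤ 1 ∧ 1 ≤ e.1 ∧ 1 ≤ e.2.1 ∧ e.1 + e.2.1 + e.2.2 ≤ n

def rel (d e : E) : Prop :=
  e.1 < d.1 ∧ d.2.1 < e.2.1 ∧ e.1 + e.2.2 ≤ d.1 + d.2.2 ∧ d.2.1 + d.2.2 ≤ e.2.1 + e.2.2

def Ok (n : ℕ) (l : List E) : Prop := (∀ e ∈ l, good n e) ∧ l.Pairwise rel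

def Ti (n : ℕ) := {l : List E // Ok n l}

def Gp (k : ℕ) := {l : List E // Ok (k+2) l ∧ ∀ e, l.head? = some e → e.1 ≤ k}

lemma rel_trans : Transitive rel := by
  intro a b c h1 h2
  unfold rel at *
  omega

lemma good_mono {n m : ℕ} {e : E} (h : good n e) (hnm : n ≤ m) : good m e := by
  unfold good at *; omega

lemma Ok_nil (n : ℕ) : Ok n [] := ⟨by simp, by simp⟩

lemma Ok_mono {n m : ℕ} {l : List E} (h : Ok n l) (hnm : n ≤ m) : Ok m l :=
  ⟨fun e he => good_mono (h.1 e he) hnm, h.2⟩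

/-- for `n ≤ 2`... actually for `n ≤ 1` there are no good entries. -/
lemma Ok_le_one {n : ℕ} (hn : n ≤ 1) {l : List E} (h : Ok n l) : l = [] := by
  cases l with
  | nil => rfl
  | cons e t =>
    have := h.1 e (by simp)
    unfold good at this; omega


lemma Ti_one_card : Nat.card (Ti 1) = 1 := by
  rw [Nat.card_eq_one_iff_unique]
  constructor
  · constructor
    intro a b
    apply Subtype.ext
    rw [Ok_le_one le_rfl a.2, Ok_le_one le_rfl b.2]
  · exact ⟨⟨[], Ok_nil 1⟩⟩

/-- shift `a` up by `v` -/
def aup (v : ℕ) (e : E) : E := (e.1 + v, e.2.1, e.2.2)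
def adown (v : ℕ) (e : E) : E := (e.1 - v, e.2.1, e.2.2)
def bup (c : ℕ) (e : E) : E := (e.1, e.2.1 + c, e.2.2)
def bdown (c : ℕ) (e : E) : E := (e.1, e.2.1 - c, e.2.2)

lemma aup_adown {v : ℕ} {e : E} (h : v ≤ e.1) : aup v (adown v e) = e := by
  unfold aup adown; rcases e with ⟨a, b, r⟩; simp at h ⊢; omega
lemma adown_aup {v : ℕ} (e : E) : adown v (aup v e) = e := by
  unfold aup adown; rcases e with ⟨a, b, r⟩; simp
lemma bup_bdown {c : ℕ} {e : E} (h : c ≤ e.2.1) : bup c (bdown c e) = e := by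
  unfold bup bdown; rcases e with ⟨a, b, r⟩; simp at h ⊢; omega
lemma bdown_bup {c : ℕ} (e : E) : bdown c (bup c e) = e := by
  unfold bup bdown; rcases e with ⟨a, b, r⟩; simp

lemma aup_inj (v : ℕ) : Function.Injective (aup v) := by
  intro x y h; unfold aup at h
  rcases x with ⟨a,b,r⟩; rcases y with ⟨a',b',r'⟩
  simp at h ⊢; omega
lemma bup_inj (c : ℕ) : Function.Injective (bup c) := by
  intro x y h; unfold bup at h
  rcases x with ⟨a,b,r⟩; rcases y with ⟨a',b',r'⟩
  simp at h ⊢; omega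

lemma rel_aup {v : ℕ} {d e : E} : rel (aup v d) (aup v e) ↔ rel d e := by
  unfold rel aup; simp; omega
lemma rel_adown {v : ℕ} {d e : E} (hd : v < d.1) (he : v < e.1) (h : rel d e) :
    rel (adown v d) (adown v e) := by
  unfold rel adown at *; simp at *; omega
lemma rel_bup {c : ℕ} {d e : E} : rel (bup c d) (bup c e) ↔ rel d e := by
  unfold rel bup; simp; omega
lemma rel_bdown {c : ℕ} {d e : E} (hd : c < d.2.1) (he : c < e.2.1) (h : rel d e) :
    rel (bdown c d) (bdown c e) := by
  unfold rel bdown at *; simp at *; omega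

/- takeWhile helpers -/
lemma takeWhile_middle {α : Type*} (p : α → Bool) (L t : List α) (e : α)
    (hL : ∀ x ∈ L, p x = true) (he : p e = false) :
    (L ++ e :: t).takeWhile p = L ∧ (L ++ e :: t).dropWhile p = e :: t := by
  induction L with
  | nil => simp [List.takeWhile_cons, List.dropWhile_cons, he]
  | cons x L ih =>
    have hx : p x = true := hL x (by simp)
    have := ih (fun y hy => hL y (by simp [hy]))
    simp [List.takeWhile_cons, List.dropWhile_cons, hx, this]

lemma dropWhile_head_false {α : Type*} (p : α → Bool) {l t : List α} {e : α}
    (h : l.dropWhile p = e :: t) : p e = false := by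
  induction l with
  | nil => simp at h
  | cons x l ih =>
    rw [List.dropWhile_cons] at h
    by_cases hx : p x = true
    · rw [if_pos hx] at h; exact ih h
    · rw [if_neg hx] at h
      cases h; simpa using hx

lemma mem_of_dropWhile_cons {α : Type*} (p : α → Bool) {l t : List α} {e : α}
    (h : l.dropWhile p = e :: t) : ∀ x, x ∈ e :: t → x ∈ l := by
  intro x hx
  have := List.takeWhile_append_dropWhile (p := p) (l := l)
  rw [h] at this
  rw [← this]
  exact List.mem_append_right _ hx


/-! ### head split: `Ti (k+2) ≃ Ti (k+1) ⊕ Gp k` -/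

lemma Ok_cons_head (k : ℕ) {t : List E} (ht : Ok (k+1) t) :
    Ok (k+2) ((((k:ℕ)+1, 1, 0) : E) :: t.map (bup 1)) := by
  obtain ⟨hg, hp⟩ := ht
  constructor
  · intro e he
    rcases List.mem_cons.1 he with h | h
    · subst h; exact ⟨by simp, by simp, by simp, by simp⟩
    · obtain ⟨y, hy, rfl⟩ := List.mem_map.1 h
      have := hg y hy
      obtain ⟨a, b, r⟩ := y
      unfold good bup at *
      simp at *
      omega
  · rw [List.pairwise_cons]
    constructor
    · intro e he
      obtain ⟨y, hy, rfl⟩ := List.mem_map.1 he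
      have := hg y hy
      unfold good at this
      unfold rel bup
      refine ⟨?_, ?_, ?_, ?_⟩ <;> simp <;> omega
    · rw [List.pairwise_map]
      exact hp.imp (fun h => rel_bup.2 h)

lemma head_a_eq (k : ℕ) {l : List E} (hl : Ok (k+2) l) {e : E} (he : l.head? = some e)
    (ha : e.1 = k+1) :
    e = ((k:ℕ)+1, 1, 0) ∧ Ok (k+1) (l.tail.map (bdown 1)) := by
  obtain ⟨t, rfl⟩ : ∃ t, l = e :: t := by
    cases l with
    | nil => simp at he
    | cons x t => simp at he; exact ⟨t, by rw [he]⟩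
  have hge := hl.1 e (by simp)
  have he0 : e = ((k:ℕ)+1, 1, 0) := by
    rcases e with ⟨a, b, r⟩
    unfold good at hge
    simp at hge ha ⊢
    omega
  have hrel : ∀ y ∈ t, rel e y := fun y hy => List.rel_of_pairwise_cons hl.2 hy
  refine ⟨he0, ?_, ?_⟩
  · intro x hx
    obtain ⟨y, hy, rfl⟩ := List.mem_map.1 hx
    rw [List.tail_cons] at hy
    have h1 := hl.1 y (by simp [hy])
    have h2 := hrel y hy
    rw [he0] at h2
    unfold good rel bdown at *
    simp at h2 ⊢
    omega
  · simp only [List.tail_cons]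
    rw [List.pairwise_map]
    refine (List.pairwise_cons.1 hl.2).2.imp_of_mem ?_
    intro x y hx hy h
    have h1 := hrel x hx; have h2 := hrel y hy
    rw [he0] at h1 h2
    exact rel_bdown (by exact h1.2.1) (by exact h2.2.1) h

def glueH (k : ℕ) : Ti (k+1) ⊕ Gp k → Ti (k+2)
  | .inl t => ⟨(((k:ℕ)+1, 1, 0) : E) :: t.1.map (bup 1), Ok_cons_head k t.2⟩
  | .inr g => ⟨g.1, g.2.1⟩

lemma glueH_bij (k : ℕ) : Function.Bijective (glueH k) := by
  constructor
  · intro x y h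
    have hl : (glueH k x).1 = (glueH k y).1 := by rw [h]
    match x, y with
    | .inl t, .inl t' =>
      simp only [glueH, List.cons.injEq] at hl
      congr 1
      exact Subtype.ext (List.map_injective_iff.2 (bup_inj 1) hl.2)
    | .inl t, .inr g =>
      exfalso
      simp only [glueH] at hl
      have := g.2.2 ((k:ℕ)+1, 1, 0) (by rw [← hl]; rfl)
      simp at this
    | .inr g, .inl t =>
      exfalso
      simp only [glueH] at hl
      have := g.2.2 ((k:ℕ)+1, 1, 0) (by rw [hl]; rfl)
      simp at this
    | .inr g, .inr g' =>
      congr 1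
      exact Subtype.ext hl
  · rintro ⟨l, hl⟩
    cases hh : l.head? with
    | none =>
      refine ⟨.inr ⟨l, hl, ?_⟩, ?_⟩
      · intro e he; rw [hh] at he; simp at he
      · rfl
    | some e =>
      by_cases ha : e.1 = k+1
      · obtain ⟨he0, hok⟩ := head_a_eq k hl hh ha
        refine ⟨.inl ⟨l.tail.map (bdown 1), hok⟩, ?_⟩
        apply Subtype.ext
        simp only [glueH]
        rw [List.map_map]
        have hmap : ∀ x ∈ l.tail, (bup 1 ∘ bdown 1) x = x := by
          intro x hx
          obtain ⟨t, rfl⟩ : ∃ t, l = e :: t := by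
            cases l with
            | nil => simp at hh
            | cons a t => simp at hh; exact ⟨t, by rw [hh]⟩
          have h2 := List.rel_of_pairwise_cons hl.2 (by simpa using hx : x ∈ t)
          rw [he0] at h2
          exact bup_bdown (by have := h2.2.1; simp at this; omega)
        rw [List.map_congr_left hmap]
        simp only [List.map_id']
        obtain ⟨t, rfl⟩ : ∃ t, l = e :: t := by
          cases l with
          | nil => simp at hh
          | cons a t => simp at hh; exact ⟨t, by rw [hh]⟩
        rw [he0]; rfl
      · refine ⟨.inr ⟨l, hl, ?_⟩, rfl⟩
        intro e' he'
        rw [hh] at he'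
        injection he' with he'
        subst he'
        have := hl.1 e (List.mem_of_mem_head? (by rw [hh]; rfl))
        unfold good at this
        omega

/-! ### main split -/

/-- `nt n e = true` iff `e` is NOT tight for `n+2`. -/
def nt (n : ℕ) (e : E) : Bool := e.1 + e.2.1 + e.2.2 != n + 2

lemma nt_eq_true {n : ℕ} {e : E} : nt n e = true ↔ e.1 + e.2.1 + e.2.2 ≠ n + 2 := by
  simp [nt]

lemma nt_eq_false {n : ℕ} {e : E} : nt n e = false ↔ e.1 + e.2.1 + e.2.2 = n + 2 := by
  simp [nt]

lemma a_le_of_head {l : List E} {e : E} {k : ℕ} (hp : l.Pairwise rel)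
    (hh : l.head? = some e) (he : e.1 ≤ k) : ∀ x ∈ l, x.1 ≤ k := by
  cases l with
  | nil => simp
  | cons d t =>
    injection hh with hh; subst hh
    intro x hx
    rcases List.mem_cons.1 hx with rfl | hx
    · exact he
    · have := List.rel_of_pairwise_cons hp hx
      have := this.1
      omega

/-- the main gluing lemma. -/
lemma Ok_glue {n v b₀ r₀ : ℕ} (hv : 1 ≤ v) (hb : v + b₀ + r₀ = n + 2) (hr : r₀ ≤ 1)
    (hb1 : 1 ≤ b₀) {L t : List E} (hL : Ok (n + 1 - v) L) (ht : Ok (n + 2 - b₀) t)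
    (hta : ∀ x ∈ t, x.1 < v) :
    Ok (n+2) (L.map (aup v) ++ ((v, b₀, r₀) : E) :: t.map (bup b₀)) := by
  have hL1 : ∀ x ∈ L, good (n + 1 - v) x := hL.1
  have ht1 : ∀ y ∈ t, good (n + 2 - b₀) y := ht.1
  constructor
  · intro x hx
    rcases List.mem_append.1 hx with hx | hx
    · obtain ⟨y, hy, rfl⟩ := List.mem_map.1 hx
      have := hL1 y hy
      obtain ⟨a, b, r⟩ := y
      unfold good aup at *; simp at *; omega
    · rcases List.mem_cons.1 hx with rfl | hx
      · unfold good; simp; omega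
      · obtain ⟨y, hy, rfl⟩ := List.mem_map.1 hx
        have := ht1 y hy
        obtain ⟨a, b, r⟩ := y
        unfold good bup at *; simp at *; omega
  · rw [List.pairwise_append]
    refine ⟨?_, ?_, ?_⟩
    · rw [List.pairwise_map]
      exact hL.2.imp (fun h => rel_aup.2 h)
    · rw [List.pairwise_cons]
      constructor
      · intro y hy
        obtain ⟨z, hz, rfl⟩ := List.mem_map.1 hy
        have hg := ht1 z hz
        have hav := hta z hz
        obtain ⟨a, b, r⟩ := z
        unfold good bup rel at *
        simp at *
        omega
      · rw [List.pairwise_map]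
        exact ht.2.imp (fun h => rel_bup.2 h)
    · intro x hx y hy
      obtain ⟨x, hxL, rfl⟩ := List.mem_map.1 hx
      have hgx := hL1 x hxL
      have hx0 : rel (aup v x) ((v, b₀, r₀) : E) := by
        obtain ⟨a, b, r⟩ := x
        unfold good aup rel at *
        simp at *
        omega
      rcases List.mem_cons.1 hy with rfl | hy
      · exact hx0
      · obtain ⟨y, hyt, rfl⟩ := List.mem_map.1 hy
        refine rel_trans hx0 ?_
        have hg := ht1 y hyt
        have hav := hta y hyt
        obtain ⟨a, b, r⟩ := y
        unfold good bup rel at *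
        simp at *
        omega

/-- right-hand side of the main decomposition. -/
def Rhs (n : ℕ) : Type :=
  Ti (n+1) ⊕ Ti (n+1) ⊕ (Σ idx : Fin n, Ti (n - idx.1) × (Ti (idx.1 + 1) ⊕ Gp idx.1))

lemma Ok_glue' {n : ℕ} (idx : Fin n) {L t : List E} (hL : Ok (n - idx.1) L)
    (r₀ : ℕ) (hr : r₀ ≤ 1) (ht : Ok (idx.1 + 1 + r₀) t) (hta : ∀ x ∈ t, x.1 < idx.1 + 1) :
    Ok (n+2) (L.map (aup (idx.1+1)) ++ ((idx.1+1, n+1-r₀-idx.1, r₀) : E) :: t.map (bup (n+1-r₀-idx.1))) := by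
  have hi : idx.1 < n := idx.2
  have h1 : n + 1 - (idx.1+1) = n - idx.1 := by omega
  have h2 : n + 2 - (n+1-r₀-idx.1) = idx.1 + 1 + r₀ := by omega
  exact Ok_glue (by omega) (by omega) hr (by omega) (h1 ▸ hL) (h2 ▸ ht) hta

lemma Gp_a_lt {k : ℕ} (g : Gp k) : ∀ x ∈ g.1, x.1 < k + 1 := by
  intro x hx
  cases hh : g.1.head? with
  | none => rw [List.head?_eq_none_iff] at hh; rw [hh] at hx; simp at hx
  | some e =>
    have he := g.2.2 e hh
    have := a_le_of_head g.2.1.2 hh he x hx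
    omega

def glueM (n : ℕ) : Rhs n → Ti (n+2)
  | .inl t => ⟨t.1, Ok_mono t.2 (by omega)⟩
  | .inr (.inl t) => ⟨(((n:ℕ)+1, 1, 0) : E) :: t.1.map (bup 1), Ok_cons_head n t.2⟩
  | .inr (.inr ⟨idx, L, .inl t⟩) =>
      ⟨L.1.map (aup (idx.1+1)) ++ ((idx.1+1, n+1-0-idx.1, 0) : E) :: t.1.map (bup (n+1-0-idx.1)),
        Ok_glue' idx L.2 0 (by omega) (by simpa using t.2)
          (by
            intro x hx
            have := t.2.1 x hx
            unfold good at this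
            omega)⟩
  | .inr (.inr ⟨idx, L, .inr g⟩) =>
      ⟨L.1.map (aup (idx.1+1)) ++ ((idx.1+1, n+1-1-idx.1, 1) : E) :: g.1.map (bup (n+1-1-idx.1)),
        Ok_glue' idx L.2 1 (by omega) (by simpa using g.2.1) (Gp_a_lt g)⟩

lemma glueM_val0 {n : ℕ} (t : Ti (n+1)) : (glueM n (.inl t)).1 = t.1 := rfl
lemma glueM_val1 {n : ℕ} (t : Ti (n+1)) :
    (glueM n (.inr (.inl t))).1 = (((n:ℕ)+1, 1, 0) : E) :: t.1.map (bup 1) := rfl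
lemma glueM_val2 {n : ℕ} (idx : Fin n) (L : Ti (n - idx.1)) (t : Ti (idx.1+1)) :
    (glueM n (.inr (.inr ⟨idx, L, .inl t⟩))).1 =
      L.1.map (aup (idx.1+1)) ++ ((idx.1+1, n+1-0-idx.1, 0) : E) :: t.1.map (bup (n+1-0-idx.1)) := rfl
lemma glueM_val3 {n : ℕ} (idx : Fin n) (L : Ti (n - idx.1)) (g : Gp idx.1) :
    (glueM n (.inr (.inr ⟨idx, L, .inr g⟩))).1 =
      L.1.map (aup (idx.1+1)) ++ ((idx.1+1, n+1-1-idx.1, 1) : E) :: g.1.map (bup (n+1-1-idx.1)) := rfl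

lemma nt_of_good {n : ℕ} {x : E} (h : good (n+1) x) : nt n x = true := by
  rw [nt_eq_true]; unfold good at h; omega

lemma good_of_nt {n : ℕ} {x : E} (h : good (n+2) x) (h2 : nt n x = true) : good (n+1) x := by
  rw [nt_eq_true] at h2; unfold good at *; omega

lemma decode0 {n : ℕ} {l : List E} (h : Ok (n+1) l) :
    l.dropWhile (nt n) = [] := by
  rw [List.dropWhile_eq_nil_iff]
  intro x hx
  exact nt_of_good (h.1 x hx)

lemma decode2 (n : ℕ) (idx : Fin n) (L : Ti (n - idx.1)) (r₀ : ℕ) (hr : r₀ ≤ 1) (tm : List E) :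
    (L.1.map (aup (idx.1+1)) ++ ((idx.1+1, n+1-r₀-idx.1, r₀) : E) :: tm).takeWhile (nt n)
      = L.1.map (aup (idx.1+1)) ∧
    (L.1.map (aup (idx.1+1)) ++ ((idx.1+1, n+1-r₀-idx.1, r₀) : E) :: tm).dropWhile (nt n)
      = ((idx.1+1, n+1-r₀-idx.1, r₀) : E) :: tm := by
  have hi : idx.1 < n := idx.2
  apply takeWhile_middle
  · intro x hx
    obtain ⟨y, hy, rfl⟩ := List.mem_map.1 hx
    have := L.2.1 y hy
    apply nt_of_good
    obtain ⟨a, b, r⟩ := y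
    unfold good aup at *
    simp at *
    omega
  · rw [nt_eq_false]; simp; omega

lemma decode1' (n : ℕ) (tm : List E) :
    ((((n:ℕ)+1, 1, 0) : E) :: tm).takeWhile (nt n) = [] ∧
    ((((n:ℕ)+1, 1, 0) : E) :: tm).dropWhile (nt n) = (((n:ℕ)+1, 1, 0) : E) :: tm := by
  have hh : nt n (((n:ℕ)+1, 1, 0) : E) = false := by rw [nt_eq_false]; simp
  constructor
  · rw [List.takeWhile_cons_of_neg (by simp [hh])]
  · rw [List.dropWhile_cons_of_neg (by simp [hh])]

lemma glueM_inj (n : ℕ) : Function.Injective (glueM n) := by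
  intro x y h
  have hl : (glueM n x).1 = (glueM n y).1 := by rw [h]
  have hdw := congrArg (List.dropWhile (nt n)) hl
  have htw := congrArg (List.takeWhile (nt n)) hl
  match x, y with
  | .inl t, .inl t' =>
    rw [glueM_val0, glueM_val0] at hl
    exact congrArg _ (Subtype.ext hl)
  | .inl t, .inr (.inl t') =>
    rw [glueM_val0, glueM_val1, decode0 t.2, (decode1' n _).2] at hdw; simp at hdw
  | .inr (.inl t'), .inl t =>
    rw [glueM_val0, glueM_val1, decode0 t.2, (decode1' n _).2] at hdw; simp at hdw
  | .inl t, .inr (.inr ⟨idx, L, .inl t'⟩) =>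
    rw [glueM_val0, glueM_val2, decode0 t.2, (decode2 n idx L 0 (by omega) _).2] at hdw
    simp at hdw
  | .inl t, .inr (.inr ⟨idx, L, .inr g⟩) =>
    rw [glueM_val0, glueM_val3, decode0 t.2, (decode2 n idx L 1 (by omega) _).2] at hdw
    simp at hdw
  | .inr (.inr ⟨idx, L, .inl t'⟩), .inl t =>
    rw [glueM_val0, glueM_val2, decode0 t.2, (decode2 n idx L 0 (by omega) _).2] at hdw
    simp at hdw
  | .inr (.inr ⟨idx, L, .inr g⟩), .inl t =>
    rw [glueM_val0, glueM_val3, decode0 t.2, (decode2 n idx L 1 (by omega) _).2] at hdw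
    simp at hdw
  | .inr (.inl t), .inr (.inl t') =>
    rw [glueM_val1, glueM_val1] at hl
    simp only [List.cons.injEq] at hl
    exact congrArg _ (congrArg _ (Subtype.ext (List.map_injective_iff.2 (bup_inj 1) hl.2)))
  | .inr (.inl t), .inr (.inr ⟨idx, L, .inl t'⟩) =>
    rw [glueM_val1, glueM_val2, (decode1' n _).2, (decode2 n idx L 0 (by omega) _).2] at hdw
    simp only [List.cons.injEq, Prod.mk.injEq] at hdw
    have : idx.1 < n := idx.2
    omega
  | .inr (.inl t), .inr (.inr ⟨idx, L, .inr g⟩) =>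
    rw [glueM_val1, glueM_val3, (decode1' n _).2, (decode2 n idx L 1 (by omega) _).2] at hdw
    simp only [List.cons.injEq, Prod.mk.injEq] at hdw
    omega
  | .inr (.inr ⟨idx, L, .inl t'⟩), .inr (.inl t) =>
    rw [glueM_val1, glueM_val2, (decode1' n _).2, (decode2 n idx L 0 (by omega) _).2] at hdw
    simp only [List.cons.injEq, Prod.mk.injEq] at hdw
    have : idx.1 < n := idx.2
    omega
  | .inr (.inr ⟨idx, L, .inr g⟩), .inr (.inl t) =>
    rw [glueM_val1, glueM_val3, (decode1' n _).2, (decode2 n idx L 1 (by omega) _).2] at hdw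
    simp only [List.cons.injEq, Prod.mk.injEq] at hdw
    omega
  | .inr (.inr ⟨idx, L, .inl t'⟩), .inr (.inr ⟨idx', L', .inl t''⟩) =>
    rw [glueM_val2, glueM_val2, (decode2 n idx L 0 (by omega) _).2,
      (decode2 n idx' L' 0 (by omega) _).2] at hdw
    rw [glueM_val2, glueM_val2, (decode2 n idx L 0 (by omega) _).1,
      (decode2 n idx' L' 0 (by omega) _).1] at htw
    simp only [List.cons.injEq, Prod.mk.injEq] at hdw
    have hidx : idx = idx' := Fin.ext (by omega)
    subst hidx
    have hL : L = L' := Subtype.ext (List.map_injective_iff.2 (aup_inj _) htw)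
    have ht : t' = t'' := Subtype.ext (List.map_injective_iff.2 (bup_inj _) hdw.2)
    rw [hL, ht]
  | .inr (.inr ⟨idx, L, .inl t'⟩), .inr (.inr ⟨idx', L', .inr g⟩) =>
    rw [glueM_val2, glueM_val3, (decode2 n idx L 0 (by omega) _).2,
      (decode2 n idx' L' 1 (by omega) _).2] at hdw
    simp only [List.cons.injEq, Prod.mk.injEq] at hdw
    omega
  | .inr (.inr ⟨idx, L, .inr g⟩), .inr (.inr ⟨idx', L', .inl t''⟩) =>
    rw [glueM_val3, glueM_val2, (decode2 n idx L 1 (by omega) _).2,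
      (decode2 n idx' L' 0 (by omega) _).2] at hdw
    simp only [List.cons.injEq, Prod.mk.injEq] at hdw
    omega
  | .inr (.inr ⟨idx, L, .inr g⟩), .inr (.inr ⟨idx', L', .inr g'⟩) =>
    rw [glueM_val3, glueM_val3, (decode2 n idx L 1 (by omega) _).2,
      (decode2 n idx' L' 1 (by omega) _).2] at hdw
    rw [glueM_val3, glueM_val3, (decode2 n idx L 1 (by omega) _).1,
      (decode2 n idx' L' 1 (by omega) _).1] at htw
    simp only [List.cons.injEq, Prod.mk.injEq] at hdw
    have hidx : idx = idx' := Fin.ext (by omega)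
    subst hidx
    have hL : L = L' := Subtype.ext (List.map_injective_iff.2 (aup_inj _) htw)
    have hg : g = g' := Subtype.ext (List.map_injective_iff.2 (bup_inj _) hdw.2)
    rw [hL, hg]

lemma map_map_id {α : Type*} (f g : α → α) (l : List α) (h : ∀ x ∈ l, f (g x) = x) :
    (l.map g).map f = l := by
  rw [List.map_map]
  have : ∀ x ∈ l, (f ∘ g) x = x := h
  rw [List.map_congr_left (g := fun x => x) this]
  simp only [List.map_id']

lemma glueM_surj (n : ℕ) : Function.Surjective (glueM n) := by
  rintro ⟨l, hl⟩
  cases h2 : l.dropWhile (nt n) with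
  | nil =>
    refine ⟨.inl ⟨l, ⟨fun x hx => ?_, hl.2⟩⟩, Subtype.ext rfl⟩
    exact good_of_nt (hl.1 x hx) (List.dropWhile_eq_nil_iff.1 h2 x hx)
  | cons e t =>
    -- basic anatomy
    have hsplit : l.takeWhile (nt n) ++ e :: t = l := by
      rw [← h2]; exact List.takeWhile_append_dropWhile
    have hmem : ∀ x ∈ e :: t, x ∈ l := mem_of_dropWhile_cons _ h2
    have hge : good (n+2) e := hl.1 e (hmem e (by simp))
    have hte : e.1 + e.2.1 + e.2.2 = n + 2 :=
      nt_eq_false.1 (dropWhile_head_false _ h2)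
    have hpair : l.Pairwise rel := hl.2
    have hpsplit := hsplit ▸ hpair
    rw [List.pairwise_append] at hpsplit
    obtain ⟨hp1, hpc, hcross⟩ := hpsplit
    have hrelet : ∀ y ∈ t, rel e y := fun y hy => List.rel_of_pairwise_cons hpc hy
    have hnt1 : ∀ x ∈ l.takeWhile (nt n), x.1 + x.2.1 + x.2.2 ≤ n + 1 := by
      intro x hx
      have h1 := nt_eq_true.1 (List.mem_takeWhile_imp hx)
      have h2' := hl.1 x (by rw [← hsplit]; exact List.mem_append_left _ hx)
      unfold good at h2'
      omega
    by_cases ha : e.1 = n + 1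
    · -- head case: e = (n+1,1,0), takeWhile = []
      have he0 : e = ((n:ℕ)+1, 1, 0) := by
        rcases e with ⟨a, b, r⟩
        unfold good at hge
        simp at hge ha hte ⊢
        omega
      have htwnil : l.takeWhile (nt n) = [] := by
        cases htw : l.takeWhile (nt n) with
        | nil => rfl
        | cons x t' =>
          exfalso
          have hx : x ∈ l.takeWhile (nt n) := by rw [htw]; simp
          have := (hcross x hx e (by simp)).2.1
          rw [he0] at this
          simp at this
          have h2' := hl.1 x (by rw [← hsplit]; exact List.mem_append_left _ hx)
          unfold good at h2'
          omega
      have hleq : l = e :: t := by rw [← hsplit, htwnil]; rfl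
      have hOk : Ok (n+1) (t.map (bdown 1)) := by
        have := (head_a_eq n hl (by rw [hleq]; rfl) ha).2
        rw [hleq] at this
        simpa using this
      refine ⟨.inr (.inl ⟨t.map (bdown 1), hOk⟩), Subtype.ext ?_⟩
      show _ = l
      erw [glueM_val1]; rw [hleq, he0]
      congr 1
      refine map_map_id _ _ _ (fun y hy => bup_bdown ?_)
      have := (hrelet y hy).2.1
      rw [he0] at this
      simp at this
      omega
    · -- split case
      have hv1 : 1 ≤ e.1 := hge.2.1
      have hvn : e.1 ≤ n := by
        unfold good at hge
        omega
      set v := e.1 with hvdef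
      have hidx : v - 1 < n := by omega
      -- left part
      have hrelxe : ∀ x ∈ l.takeWhile (nt n), rel x e :=
        fun x hx => hcross x hx e (by simp)
      have hOkL : Ok (n - (v-1)) ((l.takeWhile (nt n)).map (adown v)) := by
        constructor
        · intro x hx
          obtain ⟨z, hz, rfl⟩ := List.mem_map.1 hx
          have h1 := hnt1 z hz
          have h2' := hl.1 z (by rw [← hsplit]; exact List.mem_append_left _ hz)
          have h3 := (hrelxe z hz).1
          obtain ⟨a, b, r⟩ := z
          unfold good adown at *
          simp at *
          omega
        · rw [List.pairwise_map]
          apply (List.pairwise_iff_forall_sublist.2 ?_)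
          intro a b hab
          have hmema : a ∈ l.takeWhile (nt n) := hab.subset (by simp)
          have hmemb : b ∈ l.takeWhile (nt n) := hab.subset (by simp)
          have hr : rel a b := List.pairwise_iff_forall_sublist.1 hp1 hab
          exact rel_adown ((hrelxe a hmema).1) ((hrelxe b hmemb).1) hr
      -- the tail, generic over r₀
      have htail : ∀ y ∈ t, rel e y := hrelet
      refine ⟨.inr (.inr ⟨⟨v-1, hidx⟩, ⟨(l.takeWhile (nt n)).map (adown v), hOkL⟩, ?_⟩), ?_⟩
      · -- choose the branch according to e.2.2
        exact if hr0 : e.2.2 = 0 then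
          .inl ⟨t.map (bdown e.2.1), by
            have hb : e.2.1 = n + 2 - v := by omega
            constructor
            · intro x hx
              obtain ⟨z, hz, rfl⟩ := List.mem_map.1 hx
              have h1 := hl.1 z (hmem z (by simp [hz]))
              have h3 := (htail z hz).2.1
              obtain ⟨a, b, r⟩ := z
              unfold good bdown at *
              simp at *
              omega
            · rw [List.pairwise_map]
              apply (List.pairwise_iff_forall_sublist.2 ?_)
              intro a b hab
              have hmema : a ∈ t := hab.subset (by simp)
              have hmemb : b ∈ t := hab.subset (by simp)
              have hr : rel a b := List.pairwise_iff_forall_sublist.1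
                (List.pairwise_cons.1 hpc).2 hab
              exact rel_bdown ((htail a hmema).2.1) ((htail b hmemb).2.1) hr⟩
        else
          .inr ⟨t.map (bdown e.2.1), by
            have hr1 : e.2.2 = 1 := by have := hge.1; omega
            refine ⟨⟨?_, ?_⟩, ?_⟩
            · intro x hx
              obtain ⟨z, hz, rfl⟩ := List.mem_map.1 hx
              have h1 := hl.1 z (hmem z (by simp [hz]))
              have h3 := (htail z hz).2.1
              obtain ⟨a, b, r⟩ := z
              unfold good bdown at *
              simp at *
              omega
            · rw [List.pairwise_map]
              apply (List.pairwise_iff_forall_sublist.2 ?_)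
              intro a b hab
              have hmema : a ∈ t := hab.subset (by simp)
              have hmemb : b ∈ t := hab.subset (by simp)
              have hr : rel a b := List.pairwise_iff_forall_sublist.1
                (List.pairwise_cons.1 hpc).2 hab
              exact rel_bdown ((htail a hmema).2.1) ((htail b hmemb).2.1) hr
            · intro x hx
              rw [List.head?_map] at hx
              cases hh : t.head? with
              | none => rw [hh] at hx; simp at hx
              | some z =>
                rw [hh] at hx
                simp at hx
                have hz : z ∈ t := List.mem_of_mem_head? hh
                have := (htail z hz).1
                rw [← hx]
                unfold bdown
                simp
                omega⟩
      · -- glueM of this equals l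
        apply Subtype.ext
        show _ = l
        by_cases hr0 : e.2.2 = 0
        · rw [dif_pos hr0]; erw [glueM_val2]
          simp only
          have h1 : v - 1 + 1 = v := by omega
          have h2' : n + 1 - 0 - (v - 1) = e.2.1 := by omega
          rw [h1, h2']
          rw [map_map_id _ _ _ (fun x hx => aup_adown (by have := (hrelxe x hx).1; omega))]
          rw [map_map_id _ _ _ (fun y hy => bup_bdown (by have := (htail y hy).2.1; omega))]
          have hE : ((v, e.2.1, 0) : E) = e := by
            rw [hvdef, ← hr0]
          rw [hE, hsplit]
        · have hr1 : e.2.2 = 1 := by have := hge.1; omega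
          rw [dif_neg hr0]; erw [glueM_val3]
          simp only
          have h1 : v - 1 + 1 = v := by omega
          have h2' : n + 1 - 1 - (v - 1) = e.2.1 := by omega
          rw [h1, h2']
          rw [map_map_id _ _ _ (fun x hx => aup_adown (by have := (hrelxe x hx).1; omega))]
          rw [map_map_id _ _ _ (fun y hy => bup_bdown (by have := (htail y hy).2.1; omega))]
          have hE : ((v, e.2.1, 1) : E) = e := by
            rw [hvdef, ← hr1]
          rw [hE, hsplit]

/-! ### equivalences and finiteness -/

noncomputable def equivM (n : ℕ) : Rhs n ≃ Ti (n+2) :=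
  Equiv.ofBijective _ ⟨glueM_inj n, glueM_surj n⟩

noncomputable def equivH (k : ℕ) : Ti (k+1) ⊕ Gp k ≃ Ti (k+2) :=
  Equiv.ofBijective _ (glueH_bij k)

lemma subsingleton_Ti {n : ℕ} (hn : n ≤ 1) : Subsingleton (Ti n) :=
  ⟨fun a b => Subtype.ext (by rw [Ok_le_one hn a.2, Ok_le_one hn b.2])⟩

lemma finite_Ti : ∀ n, Finite (Ti n) := by
  intro n
  induction n using Nat.strong_induction_on with
  | _ n ih =>
    match n with
    | 0 => haveI := subsingleton_Ti (n := 0) (by omega); exact Finite.of_subsingleton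
    | 1 => haveI := subsingleton_Ti (n := 1) (by omega); exact Finite.of_subsingleton
    | (n+2) =>
      haveI hA : Finite (Ti (n+1)) := ih _ (by omega)
      haveI hFib : ∀ idx : Fin n, Finite (Ti (n - idx.1) × (Ti (idx.1+1) ⊕ Gp idx.1)) := by
        intro idx
        have hi : idx.1 < n := idx.2
        haveI h1 : Finite (Ti (n - idx.1)) := ih _ (by omega)
        haveI h2 : Finite (Ti (idx.1+1)) := ih _ (by omega)
        haveI h3 : Finite (Ti (idx.1+2)) := ih _ (by omega)
        haveI h4 : Finite (Ti (idx.1+1) ⊕ Gp idx.1) := Finite.of_equiv _ (equivH idx.1).symm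
        haveI h5 : Finite (Gp idx.1) := Finite.of_injective (Sum.inr : Gp idx.1 → Ti (idx.1+1) ⊕ Gp idx.1) Sum.inr_injective
        infer_instance
      haveI : Finite (Rhs n) := by unfold Rhs; infer_instance
      exact Finite.of_equiv _ (equivM n)

lemma finite_Gp (k : ℕ) : Finite (Gp k) := by
  haveI := finite_Ti (k+2)
  haveI : Finite (Ti (k+1) ⊕ Gp k) := Finite.of_equiv _ (equivH k).symm
  exact Finite.of_injective (Sum.inr : Gp k → Ti (k+1) ⊕ Gp k) Sum.inr_injective

lemma card_head (k : ℕ) :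
    Nat.card (Ti (k+2)) = Nat.card (Ti (k+1)) + Nat.card (Gp k) := by
  haveI := finite_Ti (k+1)
  haveI := finite_Gp k
  rw [← Nat.card_congr (equivH k), Nat.card_sum]

lemma card_sigma' {n : ℕ} (F : Fin n → Type) [h : ∀ i, Finite (F i)] :
    Nat.card (Σ i, F i) = ∑ i, Nat.card (F i) := by
  haveI := fun i => Fintype.ofFinite (F i)
  rw [Nat.card_eq_fintype_card, Fintype.card_sigma]
  congr 1
  ext i
  rw [Nat.card_eq_fintype_card]

lemma card_main (n : ℕ) :
    Nat.card (Ti (n+2)) =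
      2 * Nat.card (Ti (n+1)) + ∑ idx : Fin n, Nat.card (Ti (n - idx.1)) * Nat.card (Ti (idx.1+2)) := by
  haveI := finite_Ti (n+1)
  haveI h1 : ∀ idx : Fin n, Finite (Ti (n - idx.1)) := fun idx => finite_Ti _
  haveI h2 : ∀ idx : Fin n, Finite (Ti (idx.1+1)) := fun idx => finite_Ti _
  haveI h3 : ∀ idx : Fin n, Finite (Gp idx.1) := fun idx => finite_Gp _
  rw [← Nat.card_congr (equivM n)]
  unfold Rhs
  rw [Nat.card_sum, Nat.card_sum, card_sigma']
  have hterm : ∀ idx : Fin n,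
      Nat.card (Ti (n - idx.1) × (Ti (idx.1+1) ⊕ Gp idx.1))
        = Nat.card (Ti (n - idx.1)) * Nat.card (Ti (idx.1+2)) := by
    intro idx
    rw [Nat.card_prod, Nat.card_sum, ← card_head idx.1]
  rw [Finset.sum_congr rfl (fun idx _ => hterm idx)]
  ring

/-! ### the Schröder recurrence -/

lemma schroeder_succ (n : ℕ) :
    schroeder (n+1) = schroeder n + ∑ i ∈ Finset.range (n + 1), schroeder i * schroeder (n - i) := by
  rw [schroeder, Finset.sum_attach (Finset.range (n+1)) (fun i => schroeder i * schroeder (n - i))]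

lemma card_Ti (m : ℕ) : Nat.card (Ti (m+1)) = schroeder m := by
  induction m using Nat.strong_induction_on with
  | _ m ih =>
    match m with
    | 0 => rw [Ti_one_card, schroeder]
    | (m+1) =>
      rw [card_main m, schroeder_succ m]
      rw [Finset.sum_range_succ']
      have hterm : ∀ idx : Fin m,
          Nat.card (Ti (m - idx.1)) * Nat.card (Ti (idx.1+2))
            = schroeder (idx.1 + 1) * schroeder (m - (idx.1 + 1)) := by
        intro idx
        have hi : idx.1 < m := idx.2
        have h1 : m - idx.1 = (m - idx.1 - 1) + 1 := by omega
        have h2 : m - (idx.1 + 1) = m - idx.1 - 1 := by omega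
        rw [h1, h2, ih (m - idx.1 - 1) (by omega), ih (idx.1 + 1) (by omega)]
        ring
      rw [Finset.sum_congr rfl (fun idx _ => hterm idx)]
      rw [ih m (by omega)]
      have : ∑ idx : Fin m, schroeder (idx.1+1) * schroeder (m - (idx.1+1))
          = ∑ i ∈ Finset.range m, schroeder (i+1) * schroeder (m - (i+1)) :=
        Fin.sum_univ_eq_sum_range (fun i => schroeder (i+1) * schroeder (m - (i+1))) m
      rw [this]
      have h0 : schroeder 0 * schroeder (m - 0) = schroeder m := by
        simp [schroeder]
      rw [h0]
      ring

/-! ### relation to `TripleData` -/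

lemma TripleData.ext' {n : ℕ} {x y : TripleData n} (hs : x.s = y.s)
    (h : ∀ k (hk : k < x.s) (hk' : k < y.s),
      (x.i ⟨k, hk⟩, x.j ⟨k, hk⟩, x.r ⟨k, hk⟩) = (y.i ⟨k, hk'⟩, y.j ⟨k, hk'⟩, y.r ⟨k, hk'⟩)) :
    x = y := by
  rcases x with ⟨s, i, j, r, _, _, _, _, _, _, _, _, _, _⟩
  rcases y with ⟨s', i', j', r', _, _, _, _, _, _, _, _, _, _⟩
  dsimp at hs h
  subst hs
  obtain rfl : i = i' := funext fun k => by
    have := h k.1 k.2 k.2; simp [Prod.ext_iff] at this; exact this.1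
  obtain rfl : j = j' := funext fun k => by
    have := h k.1 k.2 k.2; simp [Prod.ext_iff] at this; exact this.1
  obtain rfl : r = r' := funext fun k => by
    have := h k.1 k.2 k.2; simp [Prod.ext_iff] at this; exact this
  rfl

def toT (n : ℕ) (l : Ti n) : TripleData n where
  s := l.1.length
  i := fun k => (l.1.get k).1 + (l.1.get k).2.2
  j := fun k => (l.1.get k).2.1 + (l.1.get k).2.2
  r := fun k => (l.1.get k).2.2
  hipos := fun k => by have := l.2.1 (l.1.get k) (l.1.get_mem k); unfold good at this; omega
  hjpos := fun k => by have := l.2.1 (l.1.get k) (l.1.get_mem k); unfold good at this; omega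
  hi := by
    intro k k' hle
    rcases eq_or_lt_of_le hle with rfl | hlt
    · exact le_rfl
    · have := List.pairwise_iff_get.1 l.2.2 k k' hlt
      dsimp only
      exact this.2.2.1
  hj := by
    intro k k' hle
    rcases eq_or_lt_of_le hle with rfl | hlt
    · exact le_rfl
    · have := List.pairwise_iff_get.1 l.2.2 k k' hlt
      dsimp only
      exact this.2.2.2
  hr := fun k => by have := l.2.1 (l.1.get k) (l.1.get_mem k); unfold good at this; omega
  hir := by
    intro k k' hlt
    have := (List.pairwise_iff_get.1 l.2.2 k k' hlt).1
    dsimp only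
    push_cast
    omega
  hirpos := fun k => by
    have := l.2.1 (l.1.get k) (l.1.get_mem k); unfold good at this
    push_cast
    omega
  hjr := by
    intro k k' hlt
    have := (List.pairwise_iff_get.1 l.2.2 k k' hlt).2.1
    dsimp only
    push_cast
    omega
  hjrpos := fun k => by
    have := l.2.1 (l.1.get k) (l.1.get_mem k); unfold good at this
    push_cast
    omega
  hbound := fun k => by
    have := l.2.1 (l.1.get k) (l.1.get_mem k); unfold good at this
    omega

/-- observation function to avoid dependent-type issues -/
def obs {n : ℕ} (t : TripleData n) (k : ℕ) : ℕ × ℕ × ℕ :=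
  if hk : k < t.s then (t.i ⟨k, hk⟩, t.j ⟨k, hk⟩, t.r ⟨k, hk⟩) else (0, 0, 0)

lemma toT_bij (n : ℕ) : Function.Bijective (toT n) := by
  constructor
  · intro x y h
    have hs : x.1.length = y.1.length := congrArg TripleData.s h
    have hobs := congrArg obs h
    apply Subtype.ext
    apply List.ext_get hs
    intro k h1 h2
    have := congrFun hobs k
    unfold obs at this
    rw [dif_pos (show k < (toT n x).s from h1), dif_pos (show k < (toT n y).s from h2)] at this
    simp only [toT, Prod.ext_iff] at this ⊢
    refine ⟨by omega, by omega, by omega⟩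
  · intro td
    have hri : ∀ k, td.r k < td.i k := fun k => by have := td.hirpos k; omega
    have hrj : ∀ k, td.r k < td.j k := fun k => by have := td.hjrpos k; omega
    refine ⟨⟨List.ofFn (fun k => ((td.i k - td.r k, td.j k - td.r k, td.r k) : E)), ?_, ?_⟩, ?_⟩
    · intro e he
      obtain ⟨k, rfl⟩ := List.mem_ofFn.1 he
      have h1 := td.hr k
      have h2 := td.hbound k
      have h3 := hri k
      have h4 := hrj k
      refine ⟨h1, ?_, ?_, ?_⟩ <;> dsimp only <;> omega
    · rw [List.pairwise_ofFn]
      intro k k' hlt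
      have h1 := td.hir hlt
      have h2 := td.hjr hlt
      have h3 := td.hi hlt.le
      have h4 := td.hj hlt.le
      have h5 := hri k; have h6 := hri k'; have h7 := hrj k; have h8 := hrj k'
      simp only at h1 h2
      unfold rel
      refine ⟨?_, ?_, ?_, ?_⟩ <;> dsimp only <;> omega
    · apply TripleData.ext' (by simp [toT])
      intro k hk hk'
      unfold toT
      simp only [List.get_ofFn]
      have h5 := hri ⟨k, hk'⟩
      have h6 := hrj ⟨k, hk'⟩
      simp only [Prod.ext_iff]
      refine ⟨?_, ?_, ?_⟩ <;> simp only [Fin.cast] <;> omega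

end SchroederCount

/-- The `(n-1)`st Schröder number counts the triples of sequences described above. -/
theorem schroeder_counts_triples (n : ℕ) (hn : 1 ≤ n) :
    Nat.card (TripleData n) = schroeder (n - 1) := by
  obtain ⟨m, rfl⟩ : ∃ m, n = m + 1 := ⟨n - 1, by omega⟩
  have h := Nat.card_congr (Equiv.ofBijective _ (SchroederCount.toT_bij (m+1)))
  rw [← h]
  simpa using SchroederCount.card_Ti m
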